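/- arXiv:2404.00738 — 2 statements merged into one kernel-verified Lean document; each statement's English description precedes it below -/
import Mathlib

section
/- Let 𝔭, 𝔮 ∈ A be distinct monic irreducible polynomials. Let M be an abelian group and f : GL₂(K∞) → M a function satisfying f|γ = f for every γ ∈ Γ∞. Then for every integer k ≥ 1 one has (f|B_{𝔭^k})|T_𝔮 = (f|T_𝔮)|B_{𝔭^k}. In particular, if f|T_𝔮 = (q^{deg 𝔮} + 1)·f, then (f|B_{𝔭^k})|T_𝔮 = (q^{deg 𝔮} + 1)·(f|B_{𝔭^k}). -/
open Polynomial
open scoped Classical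

namespace DrinfeldPaper

noncomputable section

/-- `K∞ = F((π))`, the field of formal Laurent series over `F` in the variable `π`. -/
abbrev Kinf (F : Type*) [Field F] : Type _ := LaurentSeries F

/-- The uniformizer `π` of `K∞`. -/
def piK (F : Type*) [Field F] : Kinf F := HahnSeries.single 1 1

/-- The embedding of `A = F[T]` into `K∞` sending `T` to `π⁻¹`. -/
def embA (F : Type*) [Field F] : Polynomial F →ₐ[F] Kinf F :=
  Polynomial.aeval (piK F)⁻¹

/-- `GL₂(K∞)`, the general linear group of 2×2 matrices over `K∞`. -/
abbrev GL2 (F : Type*) [Field F] : Type _ := (Matrix (Fin 2) (Fin 2) (Kinf F))ˣ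

/-- Evaluate a function on `GL₂(K∞)` at a matrix (which, in every use below, is invertible). -/
def evalGL {F : Type*} [Field F] {M : Type*} [AddCommGroup M]
    (f : GL2 F → M) (A : Matrix (Fin 2) (Fin 2) (Kinf F)) : M :=
  if h : IsUnit A then f h.unit else 0

/-- The slash action `(f|γ)(g) = f(γ·g)`. -/
def lslash {F : Type*} [Field F] {M : Type*} [AddCommGroup M]
    (f : GL2 F → M) (A : Matrix (Fin 2) (Fin 2) (Kinf F)) : GL2 F → M :=
  fun g => evalGL f (A * (g : Matrix (Fin 2) (Fin 2) (Kinf F)))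

/-- The polynomial of degree `< n` with coefficients `c 0, …, c (n-1)`. -/
def polyOf {F : Type*} [Field F] {n : ℕ} (c : Fin n → F) : Polynomial F :=
  ∑ i : Fin n, Polynomial.C (c i) * Polynomial.X ^ (i : ℕ)

/-- The Hecke operator `U_𝔭`: `f|U_𝔭 = Σ_{b ∈ A, deg b < deg 𝔭} f|[[1,b],[0,𝔭]]`. -/
def heckeU {F : Type*} [Field F] [Fintype F] {M : Type*} [AddCommGroup M]
    (p : Polynomial F) (f : GL2 F → M) : GL2 F → M :=
  fun g => ∑ c : Fin p.natDegree → F,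
    lslash f !![1, embA F (polyOf c); 0, embA F p] g

/-- The Hecke operator `T_𝔮`:
`f|T_𝔮 = f|[[𝔮,0],[0,1]] + Σ_{b ∈ A, deg b < deg 𝔮} f|[[1,b],[0,𝔮]]`. -/
def heckeT {F : Type*} [Field F] [Fintype F] {M : Type*} [AddCommGroup M]
    (p : Polynomial F) (f : GL2 F → M) : GL2 F → M :=
  fun g => lslash f !![embA F p, 0; 0, 1] g + heckeU p f g

/-- `Γ∞`, the subgroup of upper-triangular matrices in `GL₂(A)`. -/
def GammaInf (F : Type*) [Field F] : Set (GL2 F) :=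
  {γ | ∃ (a d : Fˣ) (b : Polynomial F),
    (γ : Matrix (Fin 2) (Fin 2) (Kinf F)) =
      !![algebraMap F (Kinf F) a, embA F b; 0, algebraMap F (Kinf F) d]}

/-- `Γ₀(n)`, the matrices in `GL₂(A)` whose lower-left entry is divisible by `n`. -/
def Gamma0 {F : Type*} [Field F] (n : Polynomial F) : Set (GL2 F) :=
  {γ | ∃ a b c d : Polynomial F, n ∣ c ∧ IsUnit (a * d - b * c) ∧
    (γ : Matrix (Fin 2) (Fin 2) (Kinf F)) = !![embA F a, embA F b; embA F c, embA F d]}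

section Aux

variable {F : Type*} [Field F]

lemma piK_inv : (piK F)⁻¹ = HahnSeries.single (-1 : ℤ) (1 : F) := by
  rw [piK, inv_eq_of_mul_eq_one_right]
  rw [HahnSeries.single_mul_single]
  norm_num [HahnSeries.single_zero_one]

lemma hs_sum_coeff {ι : Type*} (s : Finset ι) (h : ι → HahnSeries ℤ F) (g : ℤ) :
    (∑ i ∈ s, h i).coeff g = ∑ i ∈ s, (h i).coeff g :=
  map_sum (⟨⟨fun x => x.coeff g, rfl⟩, fun _ _ => HahnSeries.coeff_add⟩ :
    HahnSeries ℤ F →+ F) h s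

lemma algebraMap_Kinf (r : F) :
    algebraMap F (Kinf F) r = HahnSeries.single (0 : ℤ) r := by
  rw [HahnSeries.algebraMap_apply', PowerSeries.algebraMap_apply, Algebra.algebraMap_self_apply,
    HahnSeries.ofPowerSeries_C, HahnSeries.C_apply]

lemma smul_Kinf_coeff (r : F) (x : Kinf F) (a : ℤ) :
    (r • x : Kinf F).coeff a = r * x.coeff a := by
  rw [HahnSeries.coeff_smul, smul_eq_mul]

lemma embA_coeff (p : Polynomial F) :
    (embA F p).coeff (-(p.natDegree : ℤ)) = p.leadingCoeff := by
  rw [show embA F p = (Polynomial.aeval (piK F)⁻¹) p from rfl,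
    Polynomial.aeval_eq_sum_range, hs_sum_coeff, Finset.sum_eq_single p.natDegree]
  · have h2 : (p.natDegree • (-1 : ℤ)) = -(p.natDegree : ℤ) := by simp
    rw [piK_inv, HahnSeries.single_pow, one_pow, Algebra.smul_def, algebraMap_Kinf,
      HahnSeries.single_mul_single, zero_add, mul_one, h2, HahnSeries.coeff_single_same,
      Polynomial.leadingCoeff]
  · intro b _ hbne
    have hcond : ¬ (-(p.natDegree : ℤ) = b • (-1 : ℤ)) := by
      simp only [nsmul_eq_mul, mul_neg_one, neg_inj, Nat.cast_inj]
      exact fun h => hbne h.symm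
    rw [piK_inv, HahnSeries.single_pow, one_pow, Algebra.smul_def, algebraMap_Kinf,
      HahnSeries.single_mul_single, zero_add, mul_one, HahnSeries.coeff_single,
      if_neg hcond]
  · intro h; exact absurd (Finset.self_mem_range_succ _) h

lemma embA_injective : Function.Injective (embA F) := by
  rw [injective_iff_map_eq_zero]
  intro p hp
  by_contra h0
  have hc := embA_coeff p
  rw [hp] at hc
  exact Polynomial.leadingCoeff_ne_zero.mpr h0 (by rw [← hc]; simp)

lemma embA_ne_zero {p : Polynomial F} (hp : p ≠ 0) : embA F p ≠ 0 := fun h =>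
  hp (embA_injective (by simpa using h))

lemma polyOf_coeff {n : ℕ} (c : Fin n → F) (i : Fin n) : (polyOf c).coeff i = c i := by
  rw [polyOf, Polynomial.finset_sum_coeff]
  rw [Finset.sum_eq_single i]
  · simp [Polynomial.coeff_C_mul, Polynomial.coeff_X_pow]
  · intro b _ hb
    simp only [Polynomial.coeff_C_mul, Polynomial.coeff_X_pow]
    rw [if_neg (fun h => hb (Fin.ext h.symm)), mul_zero]
  · intro h; exact absurd (Finset.mem_univ i) h

lemma polyOf_injective {n : ℕ} : Function.Injective (polyOf (F := F) (n := n)) := by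
  intro c c' h
  funext i
  rw [← polyOf_coeff c i, ← polyOf_coeff c' i, h]

lemma degree_polyOf_lt {n : ℕ} (c : Fin n → F) : (polyOf c).degree < n := by
  refine lt_of_le_of_lt (Polynomial.degree_sum_le _ _) ?_
  rw [Finset.sup_lt_iff (by exact_mod_cast WithBot.bot_lt_coe _)]
  intro i _
  exact lt_of_le_of_lt (Polynomial.degree_C_mul_X_pow_le _ _) (by exact_mod_cast i.isLt)

lemma polyOf_coeffFn {n : ℕ} (p : Polynomial F) (h : p.natDegree < n) :
    polyOf (fun i : Fin n => p.coeff i) = p := by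
  rw [polyOf]
  conv_rhs => rw [p.as_sum_range' n h]
  rw [Fin.sum_univ_eq_sum_range (fun i => Polynomial.C (p.coeff i) * Polynomial.X ^ i)]
  exact Finset.sum_congr rfl fun i _ => Polynomial.C_mul_X_pow_eq_monomial

lemma isUnit_upper {a b d : Kinf F} (ha : a ≠ 0) (hd : d ≠ 0) :
    IsUnit !![a, b; 0, d] := by
  rw [Matrix.isUnit_iff_isUnit_det, Matrix.det_fin_two_of]
  rw [mul_zero, sub_zero]
  exact (mul_ne_zero ha hd).isUnit

lemma evalGL_gamma_mul {M : Type*} [AddCommGroup M] (f : GL2 F → M)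
    (hf : ∀ γ ∈ GammaInf F, ∀ g, f (γ * g) = f g) {γ : GL2 F} (hγ : γ ∈ GammaInf F)
    (A : Matrix (Fin 2) (Fin 2) (Kinf F)) :
    evalGL f ((γ : Matrix (Fin 2) (Fin 2) (Kinf F)) * A) = evalGL f A := by
  by_cases hA : IsUnit A
  · rw [evalGL, dif_pos (γ.isUnit.mul hA), evalGL, dif_pos hA]
    have h2 : (γ.isUnit.mul hA).unit = γ * hA.unit := Units.ext (by simp)
    rw [h2]
    exact hf γ hγ _
  · rw [evalGL, dif_neg, evalGL, dif_neg hA]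
    intro h
    apply hA
    have h2 := ((γ⁻¹ : GL2 F)).isUnit.mul h
    rwa [← mul_assoc, Units.inv_mul, one_mul] at h2

lemma lslash_lslash {M : Type*} [AddCommGroup M] (f : GL2 F → M)
    (A B : Matrix (Fin 2) (Fin 2) (Kinf F)) (hB : IsUnit B) :
    lslash (lslash f A) B = lslash f (A * B) := by
  funext g
  have h : IsUnit (B * (g : Matrix (Fin 2) (Fin 2) (Kinf F))) := hB.mul g.isUnit
  show evalGL (lslash f A) (B * (g : Matrix (Fin 2) (Fin 2) (Kinf F))) = evalGL f (A * B * (g : Matrix (Fin 2) (Fin 2) (Kinf F)))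
  rw [evalGL, dif_pos h]
  show evalGL f (A * (h.unit : Matrix (Fin 2) (Fin 2) (Kinf F))) = evalGL f (A * B * (g : Matrix (Fin 2) (Fin 2) (Kinf F)))
  rw [h.unit_spec, mul_assoc]

lemma evalGL_add {M : Type*} [AddCommGroup M] (u v : GL2 F → M)
    (A : Matrix (Fin 2) (Fin 2) (Kinf F)) :
    evalGL (fun g => u g + v g) A = evalGL u A + evalGL v A := by
  rw [evalGL, evalGL, evalGL]
  by_cases h : IsUnit A
  · rw [dif_pos h, dif_pos h, dif_pos h]
  · rw [dif_neg h, dif_neg h, dif_neg h, add_zero]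

lemma evalGL_sum {M : Type*} [AddCommGroup M] {ι : Type*} (s : Finset ι)
    (u : ι → GL2 F → M) (A : Matrix (Fin 2) (Fin 2) (Kinf F)) :
    evalGL (fun g => ∑ i ∈ s, u i g) A = ∑ i ∈ s, evalGL (u i) A := by
  rw [evalGL]
  by_cases h : IsUnit A
  · rw [dif_pos h]
    exact Finset.sum_congr rfl fun i _ => by rw [evalGL, dif_pos h]
  · rw [dif_neg h, eq_comm]
    exact Finset.sum_eq_zero fun i _ => by rw [evalGL, dif_neg h]

lemma evalGL_smul {M : Type*} [AddCommGroup M] (m : ℕ) (u : GL2 F → M)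
    (A : Matrix (Fin 2) (Fin 2) (Kinf F)) :
    evalGL (fun g => m • u g) A = m • evalGL u A := by
  rw [evalGL, evalGL]
  by_cases h : IsUnit A
  · rw [dif_pos h, dif_pos h]
  · rw [dif_neg h, dif_neg h, smul_zero]

end Aux

set_option maxHeartbeats 1000000 in
/-- For `𝔭 ≠ 𝔮` monic irreducible in `A = F[T]`, `M` an abelian group and
`f : GL₂(K∞) → M` invariant under `Γ∞`, one has `(f|B_{𝔭^k})|T_𝔮 = (f|T_𝔮)|B_{𝔭^k}` for every
`k ≥ 1`; in particular, if `f|T_𝔮 = (q^{deg 𝔮} + 1)·f`, then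
`(f|B_{𝔭^k})|T_𝔮 = (q^{deg 𝔮} + 1)·(f|B_{𝔭^k})`. -/
theorem statement1 {F : Type*} [Field F] [Fintype F] {M : Type*} [AddCommGroup M]
    (𝔭 𝔮 : Polynomial F) (h𝔭m : 𝔭.Monic) (h𝔭 : Irreducible 𝔭)
    (h𝔮m : 𝔮.Monic) (h𝔮 : Irreducible 𝔮) (hne : 𝔭 ≠ 𝔮)
    (f : GL2 F → M) (hf : ∀ γ ∈ GammaInf F, ∀ g, f (γ * g) = f g)
    (k : ℕ) (hk : 1 ≤ k) :
    heckeT 𝔮 (lslash f !![embA F (𝔭 ^ k), 0; 0, 1]) =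
      lslash (heckeT 𝔮 f) !![embA F (𝔭 ^ k), 0; 0, 1] ∧
    ((heckeT 𝔮 f = fun g => (Fintype.card F ^ 𝔮.natDegree + 1) • f g) →
      heckeT 𝔮 (lslash f !![embA F (𝔭 ^ k), 0; 0, 1]) =
        fun g => (Fintype.card F ^ 𝔮.natDegree + 1) •
          lslash f !![embA F (𝔭 ^ k), 0; 0, 1] g) := by
  have hq0 : 𝔮 ≠ 0 := h𝔮.ne_zero
  have hq1 : 𝔮 ≠ 1 := fun h => h𝔮.not_isUnit (h ▸ isUnit_one)
  have hp0 : (𝔭 ^ k : Polynomial F) ≠ 0 := pow_ne_zero k h𝔭.ne_zero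
  have heQ : embA F 𝔮 ≠ 0 := embA_ne_zero hq0
  have heP : embA F (𝔭 ^ k) ≠ 0 := embA_ne_zero hp0
  set B : Matrix (Fin 2) (Fin 2) (Kinf F) := !![embA F (𝔭 ^ k), 0; 0, 1] with hBdef
  set Q : Matrix (Fin 2) (Fin 2) (Kinf F) := !![embA F 𝔮, 0; 0, 1] with hQdef
  set N : (Fin 𝔮.natDegree → F) → Matrix (Fin 2) (Fin 2) (Kinf F) :=
    fun c => !![1, embA F (polyOf c); 0, embA F 𝔮] with hNdef
  have hBu : IsUnit B := isUnit_upper heP one_ne_zero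
  have hQu : IsUnit Q := isUnit_upper heQ one_ne_zero
  have hNu : ∀ c, IsUnit (N c) := fun c => isUnit_upper one_ne_zero heQ
  set σ : (Fin 𝔮.natDegree → F) → (Fin 𝔮.natDegree → F) :=
    fun c i => ((𝔭 ^ k * polyOf c) %ₘ 𝔮).coeff i with hσdef
  have hσpoly : ∀ c, polyOf (σ c) = (𝔭 ^ k * polyOf c) %ₘ 𝔮 := fun c =>
    polyOf_coeffFn _ (Polynomial.natDegree_modByMonic_lt _ h𝔮m hq1)
  have hqprime : Prime 𝔮 := h𝔮.prime
  have hndvd : ¬ 𝔮 ∣ 𝔭 ^ k := by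
    intro hdvd
    have h1 : 𝔮 ∣ 𝔭 := hqprime.dvd_of_dvd_pow hdvd
    have h2 : Associated 𝔮 𝔭 := h𝔮.associated_of_dvd h𝔭 h1
    exact hne (Polynomial.eq_of_monic_of_associated h𝔮m h𝔭m h2).symm
  have hσinj : Function.Injective σ := by
    intro c c' h
    have hpoly : (𝔭 ^ k * polyOf c) %ₘ 𝔮 = (𝔭 ^ k * polyOf c') %ₘ 𝔮 := by
      rw [← hσpoly, ← hσpoly, h]
    have e1 := Polynomial.modByMonic_add_div (𝔭 ^ k * polyOf c) 𝔮
    have e2 := Polynomial.modByMonic_add_div (𝔭 ^ k * polyOf c') 𝔮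
    have hdvd : 𝔮 ∣ 𝔭 ^ k * (polyOf c - polyOf c') :=
      ⟨(𝔭 ^ k * polyOf c) /ₘ 𝔮 - (𝔭 ^ k * polyOf c') /ₘ 𝔮, by
        linear_combination e2 - e1 + hpoly⟩
    have hdvd2 : 𝔮 ∣ polyOf c - polyOf c' := (hqprime.dvd_mul.mp hdvd).resolve_left hndvd
    have hdeg : (polyOf c - polyOf c').degree < 𝔮.degree := by
      refine lt_of_le_of_lt (Polynomial.degree_sub_le _ _) ?_
      rw [Polynomial.degree_eq_natDegree hq0]
      exact max_lt (degree_polyOf_lt c) (degree_polyOf_lt c')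
    have hz := Polynomial.eq_zero_of_dvd_of_degree_lt hdvd2 hdeg
    exact polyOf_injective (sub_eq_zero.mp hz)
  have hσbij : Function.Bijective σ := Finite.injective_iff_bijective.mp hσinj
  have hkey : ∀ (c : Fin 𝔮.natDegree → F) (A : Matrix (Fin 2) (Fin 2) (Kinf F)),
      evalGL f (B * N c * A) = evalGL f (N (σ c) * B * A) := by
    intro c A
    have hU : IsUnit !![(1 : Kinf F), embA F ((𝔭 ^ k * polyOf c) /ₘ 𝔮); 0, 1] :=
      isUnit_upper one_ne_zero one_ne_zero
    have hUmem : hU.unit ∈ GammaInf F := by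
      refine ⟨1, 1, (𝔭 ^ k * polyOf c) /ₘ 𝔮, ?_⟩
      rw [hU.unit_spec]
      simp
    have e := congrArg (embA F) (Polynomial.modByMonic_add_div (𝔭 ^ k * polyOf c) 𝔮)
    rw [map_add, map_mul, map_mul, map_pow] at e
    have hmat : B * N c =
        !![(1 : Kinf F), embA F ((𝔭 ^ k * polyOf c) /ₘ 𝔮); 0, 1] * (N (σ c) * B) := by
      simp only [hNdef, hBdef, hσpoly]
      refine Matrix.ext fun i j => ?_
      fin_cases i <;> fin_cases j <;>
        simp [Matrix.mul_apply, Fin.sum_univ_two] <;>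
        first
          | linear_combination e
          | linear_combination -e
    rw [hmat, Matrix.mul_assoc]
    have h3 := evalGL_gamma_mul f hf hUmem (N (σ c) * B * A)
    rw [hU.unit_spec] at h3
    exact h3
  have hcomm : B * Q = Q * B := by
    rw [hBdef, hQdef]
    refine Matrix.ext fun i j => ?_
    fin_cases i <;> fin_cases j <;>
      simp [Matrix.mul_apply, Fin.sum_univ_two, mul_comm]
  have hTfun : ∀ (h : GL2 F → M), heckeT 𝔮 h =
      fun g => lslash h Q g + ∑ c : Fin 𝔮.natDegree → F, lslash h (N c) g := fun h => rfl
  have hmain : heckeT 𝔮 (lslash f B) = lslash (heckeT 𝔮 f) B := by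
    rw [hTfun, hTfun]
    funext g
    calc lslash (lslash f B) Q g + ∑ c : Fin 𝔮.natDegree → F, lslash (lslash f B) (N c) g
        = lslash f (B * Q) g + ∑ c : Fin 𝔮.natDegree → F, lslash f (B * N c) g := by
          rw [lslash_lslash f B Q hQu]
          congr 1
          exact Finset.sum_congr rfl fun c _ => by rw [lslash_lslash f B (N c) (hNu c)]
      _ = lslash f (Q * B) g + ∑ c : Fin 𝔮.natDegree → F, lslash f (N c * B) g := by
          have hsum : ∑ c : Fin 𝔮.natDegree → F, lslash f (B * N c) g
              = ∑ c : Fin 𝔮.natDegree → F, lslash f (N c * B) g :=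
            Fintype.sum_bijective σ hσbij _ _ (fun c => hkey c ↑g)
          rw [hcomm, hsum]
      _ = lslash (fun g' => lslash f Q g' + ∑ c : Fin 𝔮.natDegree → F, lslash f (N c) g')
            B g := by
          have h1 : lslash f (Q * B) g = evalGL (lslash f Q)
              (B * (g : Matrix (Fin 2) (Fin 2) (Kinf F))) := by
            rw [← lslash_lslash f Q B hBu]; rfl
          have h2 : ∀ c, lslash f (N c * B) g = evalGL (lslash f (N c))
              (B * (g : Matrix (Fin 2) (Fin 2) (Kinf F))) := fun c => by
            rw [← lslash_lslash f (N c) B hBu]; rfl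
          have h3 := evalGL_add (lslash f Q)
            (fun g' => ∑ c : Fin 𝔮.natDegree → F, lslash f (N c) g')
            (B * (g : Matrix (Fin 2) (Fin 2) (Kinf F)))
          have h4 := evalGL_sum Finset.univ (fun c => lslash f (N c))
            (B * (g : Matrix (Fin 2) (Fin 2) (Kinf F)))
          show _ = evalGL (fun g' => lslash f Q g' +
            ∑ c : Fin 𝔮.natDegree → F, lslash f (N c) g')
            (B * (g : Matrix (Fin 2) (Fin 2) (Kinf F)))
          rw [h3, h4, h1, Finset.sum_congr rfl (fun c _ => h2 c)]
  refine ⟨hmain, fun hT => ?_⟩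
  rw [hmain, hT]
  funext g
  show evalGL (fun g' => (Fintype.card F ^ 𝔮.natDegree + 1) • f g') (B * (g : Matrix (Fin 2) (Fin 2) (Kinf F))) = _
  rw [evalGL_smul]
  rfl

end

end DrinfeldPaper
end

section
/- Let F be a finite field and A = F[T]. Let 𝔭 ∈ A be a monic irreducible polynomial and m ∈ A a monic polynomial divisible by 𝔭. Let Γ₀(m) = {[[a,b],[c,d]] ∈ GL₂(A) : m divides c}, let Γ₀(m,𝔭) = {[[a,b],[c,d]] ∈ GL₂(A) : m divides c and 𝔭 divides b}, and let Γ∞ denote the subgroup of upper-triangular matrices in GL₂(A). Then every element of Γ₀(m) can be written as δ·τ with δ ∈ Γ₀(m,𝔭) and τ ∈ Γ∞; in particular, Γ₀(m) is generated by Γ₀(m,𝔭) and Γ∞. -/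
open Polynomial

noncomputable section

namespace DrinfeldPaper

/-- `GL₂(A)` for `A = F[T]`: invertible 2×2 matrices over `A`, i.e. matrices over `A` whose
determinant lies in `F^×`. -/
abbrev GL2A (F : Type*) [Field F] : Type _ := (Matrix (Fin 2) (Fin 2) (Polynomial F))ˣ

/-- `Γ₀(m) = {[[a,b],[c,d]] ∈ GL₂(A) : m ∣ c}`. -/
def Gamma0A {F : Type*} [Field F] (m : Polynomial F) : Set (GL2A F) :=
  {γ | m ∣ (γ : Matrix (Fin 2) (Fin 2) (Polynomial F)) 1 0}

/-- `Γ₀(m,𝔭) = {[[a,b],[c,d]] ∈ GL₂(A) : m ∣ c and 𝔭 ∣ b}`. -/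
def Gamma0A' {F : Type*} [Field F] (m 𝔭 : Polynomial F) : Set (GL2A F) :=
  {γ | m ∣ (γ : Matrix (Fin 2) (Fin 2) (Polynomial F)) 1 0 ∧
       𝔭 ∣ (γ : Matrix (Fin 2) (Fin 2) (Polynomial F)) 0 1}

/-- `Γ∞`, the subgroup of upper-triangular matrices in `GL₂(A)`. -/
def GammaInfA (F : Type*) [Field F] : Set (GL2A F) :=
  {γ | (γ : Matrix (Fin 2) (Fin 2) (Polynomial F)) 1 0 = 0}

theorem of_mat_eq {R : Type*} (N : Matrix (Fin 2) (Fin 2) R) : Matrix.of N = N := rfl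

/-- Let `𝔭 ∈ A` be monic irreducible and `m ∈ A` monic with `𝔭 ∣ m`.
Every element of `Γ₀(m)` can be written as `δ·τ` with `δ ∈ Γ₀(m,𝔭)` and `τ ∈ Γ∞`;
in particular, `Γ₀(m)` is generated by `Γ₀(m,𝔭)` and `Γ∞`. -/
theorem statement10 {F : Type*} [Field F] [Fintype F]
    (𝔭 m : Polynomial F) (h𝔭m : 𝔭.Monic) (h𝔭 : Irreducible 𝔭)
    (hm : m.Monic) (hdvd : 𝔭 ∣ m) :
    (∀ γ ∈ Gamma0A m, ∃ δ ∈ Gamma0A' m 𝔭, ∃ τ ∈ GammaInfA F, γ = δ * τ) ∧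
    Gamma0A m ⊆ ↑(Subgroup.closure (Gamma0A' m 𝔭 ∪ GammaInfA F)) := by
  have main : ∀ γ ∈ Gamma0A m, ∃ δ ∈ Gamma0A' m 𝔭, ∃ τ ∈ GammaInfA F, γ = δ * τ := by
    intro γ hγ
    set M := (γ : Matrix (Fin 2) (Fin 2) (Polynomial F)) with hM
    set a := M 0 0
    set b := M 0 1
    set c := M 1 0
    set d := M 1 1
    -- det of γ is a unit
    have hdet : IsUnit (M.det) :=
      IsUnit.of_mul_eq_one (Matrix.det (↑γ⁻¹ : Matrix (Fin 2) (Fin 2) (Polynomial F)))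
        (by rw [← Matrix.det_mul, Units.mul_inv, Matrix.det_one])
    have hdet2 : IsUnit (a * d - b * c) := by rwa [Matrix.det_fin_two] at hdet
    -- 𝔭 ∣ c
    have h𝔭c : 𝔭 ∣ c := dvd_trans hdvd hγ
    obtain ⟨c', hc'⟩ := h𝔭c
    obtain ⟨u, hu⟩ := hdet2
    -- coprimality: x*a + y*𝔭 = 1
    have hco : IsCoprime a 𝔭 := by
      refine ⟨d * (↑u⁻¹ : Polynomial F), -(c' * b * (↑u⁻¹ : Polynomial F)), ?_⟩
      have : (a * d - b * c) * (↑u⁻¹ : Polynomial F) = 1 := by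
        rw [← hu]; exact u.mul_inv
      calc d * ↑u⁻¹ * a + -(c' * b * ↑u⁻¹) * 𝔭
          = (a * d - b * (𝔭 * c')) * ↑u⁻¹ := by ring
        _ = 1 := by rw [← hc']; exact this
    obtain ⟨x, y, hxy⟩ := hco
    set t := x * b with ht
    have hbt : 𝔭 ∣ b - a * t := by
      refine ⟨y * b, ?_⟩
      have : b - a * (x * b) = (1 - x * a) * b := by ring
      rw [ht, this, ← hxy]; ring
    -- define τ
    have hτmul : (Matrix.of !![1, t; 0, 1] : Matrix (Fin 2) (Fin 2) (Polynomial F)) *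
        Matrix.of !![1, -t; 0, 1] = 1 := by
      ext i j
      fin_cases i <;> fin_cases j <;>
        simp [Matrix.mul_apply, Fin.sum_univ_two, of_mat_eq]
    have hτmul' : (Matrix.of !![1, -t; 0, 1] : Matrix (Fin 2) (Fin 2) (Polynomial F)) *
        Matrix.of !![1, t; 0, 1] = 1 := by
      ext i j
      fin_cases i <;> fin_cases j <;>
        simp [Matrix.mul_apply, Fin.sum_univ_two, of_mat_eq]
    set τ : GL2A F := ⟨Matrix.of !![1, t; 0, 1], Matrix.of !![1, -t; 0, 1], hτmul, hτmul'⟩ with hτ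
    refine ⟨γ * τ⁻¹, ?_, τ, ?_, by group⟩
    · have hval : ((γ * τ⁻¹ : GL2A F) : Matrix (Fin 2) (Fin 2) (Polynomial F)) =
        M * Matrix.of !![1, -t; 0, 1] := rfl
      constructor
      · show m ∣ ((γ * τ⁻¹ : GL2A F) : Matrix (Fin 2) (Fin 2) (Polynomial F)) 1 0
        rw [hval]
        have : (M * Matrix.of !![1, -t; 0, 1]) 1 0 = c := by
          simp [Matrix.mul_apply, Fin.sum_univ_two, c, d, of_mat_eq]
        rw [this]; exact hγ
      · show 𝔭 ∣ ((γ * τ⁻¹ : GL2A F) : Matrix (Fin 2) (Fin 2) (Polynomial F)) 0 1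
        rw [hval]
        have : (M * Matrix.of !![1, -t; 0, 1]) 0 1 = b - a * t := by
          simp [Matrix.mul_apply, Fin.sum_univ_two, a, b, of_mat_eq]; ring
        rw [this]; exact hbt
    · show (τ : Matrix (Fin 2) (Fin 2) (Polynomial F)) 1 0 = 0
      simp [hτ, of_mat_eq]
  refine ⟨main, fun γ hγ => ?_⟩
  obtain ⟨δ, hδ, τ, hτ, rfl⟩ := main γ hγ
  exact mul_mem (Subgroup.subset_closure (Set.mem_union_left _ hδ))
    (Subgroup.subset_closure (Set.mem_union_right _ hτ))

end DrinfeldPaper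

end
end
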